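/- For real p,q with p+q=1 and p,q ∈ [0,1], the two-qubit state ρ = (1/4)[I₄ + pμ(x⃗·σ⃗)⊗I₂ + qμ I₂⊗(x⃗·σ⃗) + pqμ Σᵢ σᵢ⊗σᵢ], where μ = 1/(1−pq) and x⃗ ∈ ℝ³, has a positive partial transpose whenever ‖x⃗‖² ≤ 1 − 4p²q². -/

import Mathlib

set_option maxHeartbeats 4000000

open Matrix
open scoped Matrix Kronecker BigOperators ComplexOrder

/-- The Pauli matrices σ₁, σ₂, σ₃. -/
noncomputable def pauli : Fin 3 → Matrix (Fin 2) (Fin 2) ℂ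
  | 0 => !![0, 1; 1, 0]
  | 1 => !![0, -Complex.I; Complex.I, 0]
  | 2 => !![1, 0; 0, -1]

/-- Canonical (Bloch/Fano) form {a⃗, b⃗, M} of a two-qubit operator:
(1/4)[I₄ + Σᵢ aᵢσᵢ⊗I₂ + Σᵢ bᵢ I₂⊗σᵢ + Σᵢⱼ Mᵢⱼ σᵢ⊗σⱼ]. -/
noncomputable def canon (a b : Fin 3 → ℝ) (M : Matrix (Fin 3) (Fin 3) ℝ) :
    Matrix (Fin 2 × Fin 2) (Fin 2 × Fin 2) ℂ :=
  (1 / 4 : ℂ) • ((1 : Matrix (Fin 2 × Fin 2) (Fin 2 × Fin 2) ℂ)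
    + ∑ i : Fin 3, (a i : ℂ) • (pauli i ⊗ₖ (1 : Matrix (Fin 2) (Fin 2) ℂ))
    + ∑ i : Fin 3, (b i : ℂ) • ((1 : Matrix (Fin 2) (Fin 2) ℂ) ⊗ₖ pauli i)
    + ∑ i : Fin 3, ∑ j : Fin 3, (M i j : ℂ) • (pauli i ⊗ₖ pauli j))

/-- Partial transpose on the second qubit. -/
noncomputable def ptB (ρ : Matrix (Fin 2 × Fin 2) (Fin 2 × Fin 2) ℂ) :
    Matrix (Fin 2 × Fin 2) (Fin 2 × Fin 2) ℂ :=
  fun r s => ρ (r.1, s.2) (s.1, r.2)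

lemma claimC (t Y0 Y P2 G2 C2 : ℝ) (ht0 : 0 ≤ t) (ht : t ≤ 1/2)
    (hY0 : 0 ≤ Y0) (hY : 0 ≤ Y) (hP2 : 0 ≤ P2) (hG2 : 0 ≤ G2)
    (hP2Y : P2 ≤ Y0*Y) (hcross : Y0^2*G2 = 4*C2) (hLag : C2 ≤ P2*(Y0*Y-P2)) (hGY : G2 ≤ Y^2) :
    (1-t^2)*(4*P2+(1-2*t)*G2) ≤ ((1+t)*Y0+(1-t)*Y)^2 := by
  have h2t : (0:ℝ) ≤ 1-2*t := by linarith
  have h1t : (0:ℝ) ≤ 1-t := by linarith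
  have h1t2 : (0:ℝ) ≤ 1-t^2 := by nlinarith
  rcases eq_or_lt_of_le hY0 with h0 | h0
  · have hP0 : P2 = 0 := by nlinarith
    have hcoef : (1-t^2)*(1-2*t) ≤ (1-t)^2 := by nlinarith
    calc (1-t^2)*(4*P2+(1-2*t)*G2) = ((1-t^2)*(1-2*t))*G2 := by rw [hP0]; ring
    _ ≤ (1-t)^2*G2 := by nlinarith
    _ ≤ (1-t)^2*Y^2 := by nlinarith
    _ ≤ ((1+t)*Y0+(1-t)*Y)^2 := by nlinarith [mul_nonneg (mul_nonneg h1t hY) (mul_nonneg h1t hY)]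
  · have hY02 : (0:ℝ) < Y0^2 := by positivity
    rw [← mul_le_mul_iff_of_pos_right hY02]
    calc (1-t^2)*(4*P2+(1-2*t)*G2)*Y0^2
        = (1-t^2)*(4*P2*Y0^2) + ((1-t^2)*(1-2*t))*(Y0^2*G2) := by ring
      _ = (1-t^2)*(4*P2*Y0^2) + ((1-t^2)*(1-2*t))*(4*C2) := by rw [hcross]
      _ ≤ (1-t^2)*(4*P2*Y0^2) + ((1-t^2)*(1-2*t))*(4*(P2*(Y0*Y-P2))) := by
          nlinarith [mul_nonneg h1t2 h2t]
      _ ≤ ((1+t)*Y0+(1-t)*Y)^2*Y0^2 := by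
          nlinarith [sq_nonneg ((1+t)*Y0^2+(1-t)*(Y0*Y-2*P2)),
            mul_nonneg (mul_nonneg (mul_nonneg (mul_nonneg ht0 ht0) h1t) hP2)
              (sub_nonneg.2 hP2Y)]

lemma cs3 (x1 x2 x3 L1 L2 L3 : ℝ) :
    (x1*L1+x2*L2+x3*L3)^2 ≤ (x1^2+x2^2+x3^2)*(L1^2+L2^2+L3^2) := by
  nlinarith [sq_nonneg (x1*L2-x2*L1), sq_nonneg (x1*L3-x3*L1), sq_nonneg (x2*L3-x3*L2)]

lemma outer (t xs W LL S : ℝ) (hxs' : xs ≤ 1 - t^2) (hW : 0 ≤ W)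
    (hmain : (1-t^2) * LL ≤ W^2) (hCS : S^2 ≤ xs * (4*LL)) (hLL : 0 ≤ LL) :
    0 ≤ 2*W + S := by
  have h1 : S^2 ≤ (2*W)^2 := by nlinarith
  nlinarith [h1, hW]

lemma mid (t Y0 Y P1 P2 P3 S1 S2 S3 g1 g2 g3 x1 x2 x3 d : ℝ)
    (ht0 : 0 ≤ t) (ht : t ≤ 1/2) (hY0 : 0 ≤ Y0) (hY : 0 ≤ Y)
    (hd : d^2 = 1 - 2*t)
    (hsum : P1^2+P2^2+P3^2 + (S1^2+S2^2+S3^2) = Y0*Y)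
    (hg1 : Y0*g1 = -2*(P2*S3-P3*S2)) (hg2 : Y0*g2 = -2*(P3*S1-P1*S3))
    (hg3 : Y0*g3 = -2*(P1*S2-P2*S1))
    (hPg : P1*g1+P2*g2+P3*g3 = 0)
    (hGY : g1^2+g2^2+g3^2 ≤ Y^2)
    (hx : x1^2+x2^2+x3^2 ≤ 1-t^2) :
    0 ≤ 2*((1+t)*Y0+(1-t)*Y) + (x1*(2*(2*P1-d*g1))+x2*(2*(2*P2-d*g2))+x3*(2*(2*P3-d*g3))) := by
  have hP2 : (0:ℝ) ≤ P1^2+P2^2+P3^2 := by positivity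
  have hS2 : (0:ℝ) ≤ S1^2+S2^2+S3^2 := by positivity
  have hG2 : (0:ℝ) ≤ g1^2+g2^2+g3^2 := by positivity
  have hP2Y : P1^2+P2^2+P3^2 ≤ Y0*Y := by linarith
  have hcross : Y0^2*(g1^2+g2^2+g3^2)
      = 4*((P2*S3-P3*S2)^2+(P3*S1-P1*S3)^2+(P1*S2-P2*S1)^2) := by
    linear_combination (Y0*g1 - 2*(P2*S3-P3*S2))*hg1 + (Y0*g2 - 2*(P3*S1-P1*S3))*hg2
      + (Y0*g3 - 2*(P1*S2-P2*S1))*hg3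
  have hLagid : (P1^2+P2^2+P3^2)*(S1^2+S2^2+S3^2)
      - ((P2*S3-P3*S2)^2+(P3*S1-P1*S3)^2+(P1*S2-P2*S1)^2) = (P1*S1+P2*S2+P3*S3)^2 := by
    ring
  have hYP : Y0*Y-(P1^2+P2^2+P3^2) = S1^2+S2^2+S3^2 := by linarith
  have hLag : (P2*S3-P3*S2)^2+(P3*S1-P1*S3)^2+(P1*S2-P2*S1)^2
      ≤ (P1^2+P2^2+P3^2)*(Y0*Y-(P1^2+P2^2+P3^2)) := by
    rw [hYP]
    linarith [hLagid, sq_nonneg (P1*S1+P2*S2+P3*S3)]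
  have hmain := claimC t Y0 Y (P1^2+P2^2+P3^2) (g1^2+g2^2+g3^2)
    ((P2*S3-P3*S2)^2+(P3*S1-P1*S3)^2+(P1*S2-P2*S1)^2)
    ht0 ht hY0 hY hP2 hG2 hP2Y hcross hLag hGY
  have hL : (2*(2*P1-d*g1))^2 + (2*(2*P2-d*g2))^2 + (2*(2*P3-d*g3))^2
      = 4*(4*(P1^2+P2^2+P3^2)+(1-2*t)*(g1^2+g2^2+g3^2)) := by
    linear_combination (-16*d)*hPg + 4*(g1^2+g2^2+g3^2)*hd
  have hcs := cs3 x1 x2 x3 (2*(2*P1-d*g1)) (2*(2*P2-d*g2)) (2*(2*P3-d*g3))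
  have hW : (0:ℝ) ≤ (1+t)*Y0+(1-t)*Y := by nlinarith
  have hLL : (0:ℝ) ≤ 4*(P1^2+P2^2+P3^2)+(1-2*t)*(g1^2+g2^2+g3^2) := by
    nlinarith [mul_nonneg (by linarith : (0:ℝ) ≤ 1-2*t) hG2]
  have hCS2 : (x1*(2*(2*P1-d*g1))+x2*(2*(2*P2-d*g2))+x3*(2*(2*P3-d*g3)))^2
      ≤ (x1^2+x2^2+x3^2) * (4*(4*(P1^2+P2^2+P3^2)+(1-2*t)*(g1^2+g2^2+g3^2))) := by
    calc (x1*(2*(2*P1-d*g1))+x2*(2*(2*P2-d*g2))+x3*(2*(2*P3-d*g3)))^2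
        ≤ (x1^2+x2^2+x3^2)*((2*(2*P1-d*g1))^2 + (2*(2*P2-d*g2))^2 + (2*(2*P3-d*g3))^2) := hcs
    _ = (x1^2+x2^2+x3^2) * (4*(4*(P1^2+P2^2+P3^2)+(1-2*t)*(g1^2+g2^2+g3^2))) := by rw [hL]
  exact outer t (x1^2+x2^2+x3^2) ((1+t)*Y0+(1-t)*Y)
    (4*(P1^2+P2^2+P3^2)+(1-2*t)*(g1^2+g2^2+g3^2)) (x1*(2*(2*P1-d*g1))+x2*(2*(2*P2-d*g2))+x3*(2*(2*P3-d*g3)))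
    hx hW hmain hCS2 hLL

lemma quad_nonneg (p q x1 x2 x3 a0 b0 a1 b1 a2 b2 a3 b3 : ℝ)
    (hp : 0 ≤ p) (hp1 : p ≤ 1) (hpq : p + q = 1)
    (hx : x1^2 + x2^2 + x3^2 ≤ 1 - 4*p^2*q^2) :
    0 ≤ ((1-2*p*q)*(a0^2+b0^2+a1^2+b1^2+a2^2+b2^2+a3^2+b3^2) + 2*p*q*((a0+a3)^2+(b0+b3)^2) + x1*(p*(2*(a0*a2+b0*b2+a1*a3+b1*b3))+q*(2*(a0*a1+b0*b1+a2*a3+b2*b3))) + x2*(p*(2*(a0*b2-b0*a2+a1*b3-b1*a3))+q*(-2*(a0*b1-b0*a1+a2*b3-b2*a3))) + x3*(p*(a0^2+b0^2+a1^2+b1^2-a2^2-b2^2-a3^2-b3^2)+q*(a0^2+b0^2-a1^2-b1^2+a2^2+b2^2-a3^2-b3^2))) := by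
  have hq2 : q = 1 - p := by linarith
  subst hq2
  have ht0 : (0:ℝ) ≤ (2*(p*(1-p))) := by nlinarith
  have ht : (2*(p*(1-p))) ≤ 1/2 := by nlinarith [sq_nonneg (p - 1/2)]
  have hY0 : (0:ℝ) ≤ ((a0+a3)^2+(b0+b3)^2) := by positivity
  have hY : (0:ℝ) ≤ ((a1+a2)^2+(b1+b2)^2+(b2-b1)^2+(a1-a2)^2+(a0-a3)^2+(b0-b3)^2) := by positivity
  have hd : ((p-(1-p)))^2 = 1 - 2*(2*(p*(1-p))) := by ring
  have hsum : ((a0+a3)*(a1+a2)+(b0+b3)*(b1+b2))^2+((a0+a3)*(b2-b1)+(b0+b3)*(a1-a2))^2+((a0+a3)*(a0-a3)+(b0+b3)*(b0-b3))^2 + (((a0+a3)*(b1+b2)-(b0+b3)*(a1+a2))^2+((a0+a3)*(a1-a2)-(b0+b3)*(b2-b1))^2+((a0+a3)*(b0-b3)-(b0+b3)*(a0-a3))^2) = ((a0+a3)^2+(b0+b3)^2)*((a1+a2)^2+(b1+b2)^2+(b2-b1)^2+(a1-a2)^2+(a0-a3)^2+(b0-b3)^2) := by ring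
  have hg1 : ((a0+a3)^2+(b0+b3)^2)*(-2*((b2-b1)*(b0-b3)-(a0-a3)*(a1-a2))) = -2*(((a0+a3)*(b2-b1)+(b0+b3)*(a1-a2))*((a0+a3)*(b0-b3)-(b0+b3)*(a0-a3))-((a0+a3)*(a0-a3)+(b0+b3)*(b0-b3))*((a0+a3)*(a1-a2)-(b0+b3)*(b2-b1))) := by ring
  have hg2 : ((a0+a3)^2+(b0+b3)^2)*(-2*((a0-a3)*(b1+b2)-(a1+a2)*(b0-b3))) = -2*(((a0+a3)*(a0-a3)+(b0+b3)*(b0-b3))*((a0+a3)*(b1+b2)-(b0+b3)*(a1+a2))-((a0+a3)*(a1+a2)+(b0+b3)*(b1+b2))*((a0+a3)*(b0-b3)-(b0+b3)*(a0-a3))) := by ring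
  have hg3 : ((a0+a3)^2+(b0+b3)^2)*(-2*((a1+a2)*(a1-a2)-(b2-b1)*(b1+b2))) = -2*(((a0+a3)*(a1+a2)+(b0+b3)*(b1+b2))*((a0+a3)*(a1-a2)-(b0+b3)*(b2-b1))-((a0+a3)*(b2-b1)+(b0+b3)*(a1-a2))*((a0+a3)*(b1+b2)-(b0+b3)*(a1+a2))) := by ring
  have hPg : ((a0+a3)*(a1+a2)+(b0+b3)*(b1+b2))*(-2*((b2-b1)*(b0-b3)-(a0-a3)*(a1-a2)))+((a0+a3)*(b2-b1)+(b0+b3)*(a1-a2))*(-2*((a0-a3)*(b1+b2)-(a1+a2)*(b0-b3)))+((a0+a3)*(a0-a3)+(b0+b3)*(b0-b3))*(-2*((a1+a2)*(a1-a2)-(b2-b1)*(b1+b2))) = 0 := by ring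
  have hGYid : (((a1+a2)^2+(b1+b2)^2+(b2-b1)^2+(a1-a2)^2+(a0-a3)^2+(b0-b3)^2))^2 - ((-2*((b2-b1)*(b0-b3)-(a0-a3)*(a1-a2)))^2+(-2*((a0-a3)*(b1+b2)-(a1+a2)*(b0-b3)))^2+(-2*((a1+a2)*(a1-a2)-(b2-b1)*(b1+b2)))^2)
      = (((a1+a2)^2+(b2-b1)^2+(a0-a3)^2)-((b1+b2)^2+(a1-a2)^2+(b0-b3)^2))^2 + 4*(((a1+a2)*(b1+b2)+(b2-b1)*(a1-a2)+(a0-a3)*(b0-b3)))^2 := by ring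
  have hGY : (-2*((b2-b1)*(b0-b3)-(a0-a3)*(a1-a2)))^2+(-2*((a0-a3)*(b1+b2)-(a1+a2)*(b0-b3)))^2+(-2*((a1+a2)*(a1-a2)-(b2-b1)*(b1+b2)))^2 ≤ (((a1+a2)^2+(b1+b2)^2+(b2-b1)^2+(a1-a2)^2+(a0-a3)^2+(b0-b3)^2))^2 := by
    linarith [hGYid, sq_nonneg (((a1+a2)^2+(b2-b1)^2+(a0-a3)^2)-((b1+b2)^2+(a1-a2)^2+(b0-b3)^2)), sq_nonneg (((a1+a2)*(b1+b2)+(b2-b1)*(a1-a2)+(a0-a3)*(b0-b3)))]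
  have hx' : x1^2+x2^2+x3^2 ≤ 1-((2*(p*(1-p))))^2 := by nlinarith
  have h := mid (2*(p*(1-p))) ((a0+a3)^2+(b0+b3)^2) ((a1+a2)^2+(b1+b2)^2+(b2-b1)^2+(a1-a2)^2+(a0-a3)^2+(b0-b3)^2) ((a0+a3)*(a1+a2)+(b0+b3)*(b1+b2)) ((a0+a3)*(b2-b1)+(b0+b3)*(a1-a2)) ((a0+a3)*(a0-a3)+(b0+b3)*(b0-b3)) ((a0+a3)*(b1+b2)-(b0+b3)*(a1+a2)) ((a0+a3)*(a1-a2)-(b0+b3)*(b2-b1)) ((a0+a3)*(b0-b3)-(b0+b3)*(a0-a3)) (-2*((b2-b1)*(b0-b3)-(a0-a3)*(a1-a2))) (-2*((a0-a3)*(b1+b2)-(a1+a2)*(b0-b3))) (-2*((a1+a2)*(a1-a2)-(b2-b1)*(b1+b2))) x1 x2 x3 (p-(1-p)) ht0 ht hY0 hY hd hsum hg1 hg2 hg3 hPg hGY hx'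
  have hid : 4*(((1-2*p*(1-p))*(a0^2+b0^2+a1^2+b1^2+a2^2+b2^2+a3^2+b3^2) + 2*p*(1-p)*((a0+a3)^2+(b0+b3)^2) + x1*(p*(2*(a0*a2+b0*b2+a1*a3+b1*b3))+(1-p)*(2*(a0*a1+b0*b1+a2*a3+b2*b3))) + x2*(p*(2*(a0*b2-b0*a2+a1*b3-b1*a3))+(1-p)*(-2*(a0*b1-b0*a1+a2*b3-b2*a3))) + x3*(p*(a0^2+b0^2+a1^2+b1^2-a2^2-b2^2-a3^2-b3^2)+(1-p)*(a0^2+b0^2-a1^2-b1^2+a2^2+b2^2-a3^2-b3^2)))) = 2*((1+(2*(p*(1-p))))*((a0+a3)^2+(b0+b3)^2)+(1-(2*(p*(1-p))))*((a1+a2)^2+(b1+b2)^2+(b2-b1)^2+(a1-a2)^2+(a0-a3)^2+(b0-b3)^2)) + (x1*(2*(2*((a0+a3)*(a1+a2)+(b0+b3)*(b1+b2))-(p-(1-p))*(-2*((b2-b1)*(b0-b3)-(a0-a3)*(a1-a2)))))+x2*(2*(2*((a0+a3)*(b2-b1)+(b0+b3)*(a1-a2))-(p-(1-p))*(-2*((a0-a3)*(b1+b2)-(a1+a2)*(b0-b3)))))+x3*(2*(2*((a0+a3)*(a0-a3)+(b0+b3)*(b0-b3))-(p-(1-p))*(-2*((a1+a2)*(a1-a2)-(b2-b1)*(b1+b2))))))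 := by ring
  linarith [h, hid]

/-- Local output states of the asymmetric local Pauli cloner are PPT whenever
‖x⃗‖² ≤ 1 − 4p²q². -/
theorem local_output_ppt (p q : ℝ) (hp : 0 ≤ p) (hp1 : p ≤ 1) (hq : 0 ≤ q) (hq1 : q ≤ 1)
    (hpq : p + q = 1) (x : Fin 3 → ℝ)
    (hx : ∑ i, x i ^ 2 ≤ 1 - 4 * p ^ 2 * q ^ 2) :
    (ptB (canon (fun i => p * (1 / (1 - p * q)) * x i)
        (fun i => q * (1 / (1 - p * q)) * x i)
        ((p * q * (1 / (1 - p * q))) • (1 : Matrix (Fin 3) (Fin 3) ℝ)))).PosSemidef := by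
  have hpq4 : p * q ≤ 1/4 := by nlinarith [sq_nonneg (p - q)]
  have hpq0 : 0 ≤ p * q := mul_nonneg hp hq
  have hD : (0:ℝ) < 1 - p*q := by linarith
  refine Matrix.posSemidef_iff_dotProduct_mulVec.mpr ⟨?_, ?_⟩
  · -- Hermitian
    apply Matrix.IsHermitian.ext
    rintro ⟨i, j⟩ ⟨k, l⟩
    fin_cases i <;> fin_cases j <;> fin_cases k <;> fin_cases l <;>
    · simp only [ptB, canon, dotProduct, Matrix.mulVec, Fintype.sum_prod_type, Fin.sum_univ_two,
    Fin.sum_univ_three, Matrix.smul_apply, Matrix.add_apply, Matrix.one_apply,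
    Matrix.kroneckerMap_apply, Pi.star_apply, pauli, Matrix.cons_val', Matrix.cons_val_zero,
    Matrix.cons_val_one, Matrix.head_cons, Matrix.empty_val', Matrix.cons_val_fin_one,
    Matrix.head_fin_const, smul_eq_mul, Prod.mk.injEq, Prod.ext_iff, Prod.fst_zero, Prod.snd_zero,
    Prod.fst_one, Prod.snd_one, Fin.zero_eq_one_iff, Fin.one_eq_zero_iff, mul_one, mul_zero,
    if_true, if_false, eq_self_iff_true, one_ne_zero, and_self, and_true, true_and, ne_eq,
    Nat.succ_ne_self, Fin.reduceEq, reduceIte]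
      rw [Complex.ext_iff]
      constructor <;>
      · simp only [Complex.star_def, _root_.map_add, _root_.map_mul, _root_.map_one, _root_.map_neg, Complex.conj_ofReal,
          Complex.conj_I, _root_.map_div₀, _root_.map_ofNat,
          Complex.add_re, Complex.add_im, Complex.mul_re, Complex.mul_im, Complex.I_re,
          Complex.I_im, Complex.ofReal_re, Complex.ofReal_im, Complex.one_re, Complex.one_im,
          Complex.neg_re, Complex.neg_im, Complex.div_re, Complex.div_im, Complex.inv_re,
          Complex.inv_im, Complex.normSq_apply, Complex.re_ofNat, Complex.im_ofNat,
          Complex.zero_re, Complex.zero_im, mul_zero, mul_one, zero_mul, one_mul, neg_zero,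
          zero_add, add_zero, sub_zero, zero_sub, zero_div]
        norm_num
        try ring1
  · intro v
    have hexp : dotProduct (star v) ((ptB (canon (fun i => p * (1 / (1 - p * q)) * x i)
        (fun i => q * (1 / (1 - p * q)) * x i)
        ((p * q * (1 / (1 - p * q))) • (1 : Matrix (Fin 3) (Fin 3) ℝ)))).mulVec v)
        = (((1/4)*(((v ((0:Fin 2),(0:Fin 2))).re^2+(v ((0:Fin 2),(0:Fin 2))).im^2+(v ((0:Fin 2),(1:Fin 2))).re^2+(v ((0:Fin 2),(1:Fin 2))).im^2+(v ((1:Fin 2),(0:Fin 2))).re^2+(v ((1:Fin 2),(0:Fin 2))).im^2+(v ((1:Fin 2),(1:Fin 2))).re^2+(v ((1:Fin 2),(1:Fin 2))).im^2) + (1/(1-p*q))*(p*(x 0*(2*((v ((0:Fin 2),(0:Fin 2))).re*(v ((1:Fin 2),(0:Fin 2))).re+(v ((0:Fin 2),(0:Fin 2))).im*(v ((1:Fin 2),(0:Fin 2))).im+(v ((0:Fin 2),(1:Fin 2))).re*(v ((1:Fin 2),(1:Fin 2))).re+(v ((0:Fin 2),(1:Fin 2))).im*(v ((1:Fin 2),(1:Fin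 2))).im))+x 1*(2*((v ((0:Fin 2),(0:Fin 2))).re*(v ((1:Fin 2),(0:Fin 2))).im-(v ((0:Fin 2),(0:Fin 2))).im*(v ((1:Fin 2),(0:Fin 2))).re+(v ((0:Fin 2),(1:Fin 2))).re*(v ((1:Fin 2),(1:Fin 2))).im-(v ((0:Fin 2),(1:Fin 2))).im*(v ((1:Fin 2),(1:Fin 2))).re))+x 2*((v ((0:Fin 2),(0:Fin 2))).re^2+(v ((0:Fin 2),(0:Fin 2))).im^2+(v ((0:Fin 2),(1:Fin 2))).re^2+(v ((0:Fin 2),(1:Fin 2))).im^2-(v ((1:Fin 2),(0:Fin 2))).re^2-(v ((1:Fin 2),(0:Fin 2))).im^2-(v ((1:Fin 2),(1:Fin 2))).re^2-(v ((1:Fin 2),(1:Fin 2))).im^2)) + q*(x 0*(2*((v ((0:Fin 2),(0:Fin 2))).re*(v ((0:Fin 2),(1:Fin 2))).re+(v ((0:Fin 2),(0:Fin 2))).im*(v ((0:Fin 2),(1:Fin 2))).im+(v ((1:Fin 2),(0:Fin 2))).re*(v ((1:Fin 2),(1:Fin 2))).re+(v ((1:Fin 2),(0:Fin 2))).im*(v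 ((1:Fin 2),(1:Fin 2))).im))+x 1*(-2*((v ((0:Fin 2),(0:Fin 2))).re*(v ((0:Fin 2),(1:Fin 2))).im-(v ((0:Fin 2),(0:Fin 2))).im*(v ((0:Fin 2),(1:Fin 2))).re+(v ((1:Fin 2),(0:Fin 2))).re*(v ((1:Fin 2),(1:Fin 2))).im-(v ((1:Fin 2),(0:Fin 2))).im*(v ((1:Fin 2),(1:Fin 2))).re))+x 2*((v ((0:Fin 2),(0:Fin 2))).re^2+(v ((0:Fin 2),(0:Fin 2))).im^2-(v ((0:Fin 2),(1:Fin 2))).re^2-(v ((0:Fin 2),(1:Fin 2))).im^2+(v ((1:Fin 2),(0:Fin 2))).re^2+(v ((1:Fin 2),(0:Fin 2))).im^2-(v ((1:Fin 2),(1:Fin 2))).re^2-(v ((1:Fin 2),(1:Fin 2))).im^2)) + p*q*(2*(((v ((0:Fin 2),(0:Fin 2))).re+(v ((1:Fin 2),(1:Fin 2))).re)^2+((v ((0:Fin 2),(0:Fin 2))).im+(v ((1:Fin 2),(1:Fin 2))).im)^2)-((v ((0:Fin 2),(0:Fin 2))).re^2+(v ((0:Fin 2),(0:Fin 2))).im^2+(v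 ((0:Fin 2),(1:Fin 2))).re^2+(v ((0:Fin 2),(1:Fin 2))).im^2+(v ((1:Fin 2),(0:Fin 2))).re^2+(v ((1:Fin 2),(0:Fin 2))).im^2+(v ((1:Fin 2),(1:Fin 2))).re^2+(v ((1:Fin 2),(1:Fin 2))).im^2)))) : ℝ) : ℂ) := by
      simp only [ptB, canon, dotProduct, Matrix.mulVec, Fintype.sum_prod_type, Fin.sum_univ_two,
    Fin.sum_univ_three, Matrix.smul_apply, Matrix.add_apply, Matrix.one_apply,
    Matrix.kroneckerMap_apply, Pi.star_apply, pauli, Matrix.cons_val', Matrix.cons_val_zero,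
    Matrix.cons_val_one, Matrix.head_cons, Matrix.empty_val', Matrix.cons_val_fin_one,
    Matrix.head_fin_const, smul_eq_mul, Prod.mk.injEq, Prod.ext_iff, Prod.fst_zero, Prod.snd_zero,
    Prod.fst_one, Prod.snd_one, Fin.zero_eq_one_iff, Fin.one_eq_zero_iff, mul_one, mul_zero,
    if_true, if_false, eq_self_iff_true, one_ne_zero, and_self, and_true, true_and, ne_eq,
    Nat.succ_ne_self, Fin.reduceEq, reduceIte]
      apply Complex.ext <;>
      simp only [Complex.add_re, Complex.add_im, Complex.mul_re, Complex.mul_im, Complex.I_re,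
      Complex.I_im, Complex.ofReal_re, Complex.ofReal_im, Complex.conj_re, Complex.conj_im,
      Complex.one_re, Complex.one_im, Complex.neg_re, Complex.neg_im, Complex.sub_re,
      Complex.sub_im, Complex.div_re, Complex.div_im, Complex.inv_re, Complex.inv_im,
      Complex.normSq_apply, Complex.re_ofNat, Complex.im_ofNat, Complex.zero_re, Complex.zero_im,
      Complex.ofReal_mul, Complex.ofReal_one, Complex.ofReal_zero, mul_zero, mul_one, zero_mul,
      one_mul, neg_zero, zero_add, add_zero, sub_zero, zero_sub, zero_div] <;>
      norm_num <;>
      ring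
    rw [hexp, Complex.zero_le_real]
    have hx3 : (x 0)^2 + (x 1)^2 + (x 2)^2 ≤ 1 - 4*p^2*q^2 := by
      have := hx
      rw [Fin.sum_univ_three] at this
      linarith
    have hQQ := quad_nonneg p q (x 0) (x 1) (x 2)
      (v ((0:Fin 2),(0:Fin 2))).re (v ((0:Fin 2),(0:Fin 2))).im
      (v ((0:Fin 2),(1:Fin 2))).re (v ((0:Fin 2),(1:Fin 2))).im
      (v ((1:Fin 2),(0:Fin 2))).re (v ((1:Fin 2),(0:Fin 2))).im
      (v ((1:Fin 2),(1:Fin 2))).re (v ((1:Fin 2),(1:Fin 2))).im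
      hp hp1 hpq hx3
    have hE : ((1/4)*(((v ((0:Fin 2),(0:Fin 2))).re^2+(v ((0:Fin 2),(0:Fin 2))).im^2+(v ((0:Fin 2),(1:Fin 2))).re^2+(v ((0:Fin 2),(1:Fin 2))).im^2+(v ((1:Fin 2),(0:Fin 2))).re^2+(v ((1:Fin 2),(0:Fin 2))).im^2+(v ((1:Fin 2),(1:Fin 2))).re^2+(v ((1:Fin 2),(1:Fin 2))).im^2) + (1/(1-p*q))*(p*(x 0*(2*((v ((0:Fin 2),(0:Fin 2))).re*(v ((1:Fin 2),(0:Fin 2))).re+(v ((0:Fin 2),(0:Fin 2))).im*(v ((1:Fin 2),(0:Fin 2))).im+(v ((0:Fin 2),(1:Fin 2))).re*(v ((1:Fin 2),(1:Fin 2))).re+(v ((0:Fin 2),(1:Fin 2))).im*(v ((1:Fin 2),(1:Fin 2))).im))+x 1*(2*((v ((0:Fin 2),(0:Fin 2))).re*(v ((1:Fin 2),(0:Fin 2))).im-(v ((0:Fin 2),(0:Fin 2))).im*(v ((1:Fin 2),(0:Fin 2))).re+(v ((0:Fin 2),(1:Fin 2))).re*(v ((1:Fin 2),(1:Fin 2))).im-(v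 ((0:Fin 2),(1:Fin 2))).im*(v ((1:Fin 2),(1:Fin 2))).re))+x 2*((v ((0:Fin 2),(0:Fin 2))).re^2+(v ((0:Fin 2),(0:Fin 2))).im^2+(v ((0:Fin 2),(1:Fin 2))).re^2+(v ((0:Fin 2),(1:Fin 2))).im^2-(v ((1:Fin 2),(0:Fin 2))).re^2-(v ((1:Fin 2),(0:Fin 2))).im^2-(v ((1:Fin 2),(1:Fin 2))).re^2-(v ((1:Fin 2),(1:Fin 2))).im^2)) + q*(x 0*(2*((v ((0:Fin 2),(0:Fin 2))).re*(v ((0:Fin 2),(1:Fin 2))).re+(v ((0:Fin 2),(0:Fin 2))).im*(v ((0:Fin 2),(1:Fin 2))).im+(v ((1:Fin 2),(0:Fin 2))).re*(v ((1:Fin 2),(1:Fin 2))).re+(v ((1:Fin 2),(0:Fin 2))).im*(v ((1:Fin 2),(1:Fin 2))).im))+x 1*(-2*((v ((0:Fin 2),(0:Fin 2))).re*(v ((0:Fin 2),(1:Fin 2))).im-(v ((0:Fin 2),(0:Fin 2))).im*(v ((0:Fin 2),(1:Fin 2))).re+(v ((1:Fin 2),(0:Fin 2))).re*(v ((1:Fin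 2),(1:Fin 2))).im-(v ((1:Fin 2),(0:Fin 2))).im*(v ((1:Fin 2),(1:Fin 2))).re))+x 2*((v ((0:Fin 2),(0:Fin 2))).re^2+(v ((0:Fin 2),(0:Fin 2))).im^2-(v ((0:Fin 2),(1:Fin 2))).re^2-(v ((0:Fin 2),(1:Fin 2))).im^2+(v ((1:Fin 2),(0:Fin 2))).re^2+(v ((1:Fin 2),(0:Fin 2))).im^2-(v ((1:Fin 2),(1:Fin 2))).re^2-(v ((1:Fin 2),(1:Fin 2))).im^2)) + p*q*(2*(((v ((0:Fin 2),(0:Fin 2))).re+(v ((1:Fin 2),(1:Fin 2))).re)^2+((v ((0:Fin 2),(0:Fin 2))).im+(v ((1:Fin 2),(1:Fin 2))).im)^2)-((v ((0:Fin 2),(0:Fin 2))).re^2+(v ((0:Fin 2),(0:Fin 2))).im^2+(v ((0:Fin 2),(1:Fin 2))).re^2+(v ((0:Fin 2),(1:Fin 2))).im^2+(v ((1:Fin 2),(0:Fin 2))).re^2+(v ((1:Fin 2),(0:Fin 2))).im^2+(v ((1:Fin 2),(1:Fin 2))).re^2+(v ((1:Fin 2),(1:Fin 2))).im^2)))) :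 ℝ) = (((1-2*p*q)*((v ((0:Fin 2),(0:Fin 2))).re^2+(v ((0:Fin 2),(0:Fin 2))).im^2+(v ((0:Fin 2),(1:Fin 2))).re^2+(v ((0:Fin 2),(1:Fin 2))).im^2+(v ((1:Fin 2),(0:Fin 2))).re^2+(v ((1:Fin 2),(0:Fin 2))).im^2+(v ((1:Fin 2),(1:Fin 2))).re^2+(v ((1:Fin 2),(1:Fin 2))).im^2) + 2*p*q*(((v ((0:Fin 2),(0:Fin 2))).re+(v ((1:Fin 2),(1:Fin 2))).re)^2+((v ((0:Fin 2),(0:Fin 2))).im+(v ((1:Fin 2),(1:Fin 2))).im)^2) + x 0*(p*(2*((v ((0:Fin 2),(0:Fin 2))).re*(v ((1:Fin 2),(0:Fin 2))).re+(v ((0:Fin 2),(0:Fin 2))).im*(v ((1:Fin 2),(0:Fin 2))).im+(v ((0:Fin 2),(1:Fin 2))).re*(v ((1:Fin 2),(1:Fin 2))).re+(v ((0:Fin 2),(1:Fin 2))).im*(v ((1:Fin 2),(1:Fin 2))).im))+q*(2*((v ((0:Fin 2),(0:Fin 2))).re*(v ((0:Fin 2),(1:Fin 2))).re+(v ((0:Fin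 2),(0:Fin 2))).im*(v ((0:Fin 2),(1:Fin 2))).im+(v ((1:Fin 2),(0:Fin 2))).re*(v ((1:Fin 2),(1:Fin 2))).re+(v ((1:Fin 2),(0:Fin 2))).im*(v ((1:Fin 2),(1:Fin 2))).im))) + x 1*(p*(2*((v ((0:Fin 2),(0:Fin 2))).re*(v ((1:Fin 2),(0:Fin 2))).im-(v ((0:Fin 2),(0:Fin 2))).im*(v ((1:Fin 2),(0:Fin 2))).re+(v ((0:Fin 2),(1:Fin 2))).re*(v ((1:Fin 2),(1:Fin 2))).im-(v ((0:Fin 2),(1:Fin 2))).im*(v ((1:Fin 2),(1:Fin 2))).re))+q*(-2*((v ((0:Fin 2),(0:Fin 2))).re*(v ((0:Fin 2),(1:Fin 2))).im-(v ((0:Fin 2),(0:Fin 2))).im*(v ((0:Fin 2),(1:Fin 2))).re+(v ((1:Fin 2),(0:Fin 2))).re*(v ((1:Fin 2),(1:Fin 2))).im-(v ((1:Fin 2),(0:Fin 2))).im*(v ((1:Fin 2),(1:Fin 2))).re))) + x 2*(p*((v ((0:Fin 2),(0:Fin 2))).re^2+(v ((0:Fin 2),(0:Fin 2))).im^2+(v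 ((0:Fin 2),(1:Fin 2))).re^2+(v ((0:Fin 2),(1:Fin 2))).im^2-(v ((1:Fin 2),(0:Fin 2))).re^2-(v ((1:Fin 2),(0:Fin 2))).im^2-(v ((1:Fin 2),(1:Fin 2))).re^2-(v ((1:Fin 2),(1:Fin 2))).im^2)+q*((v ((0:Fin 2),(0:Fin 2))).re^2+(v ((0:Fin 2),(0:Fin 2))).im^2-(v ((0:Fin 2),(1:Fin 2))).re^2-(v ((0:Fin 2),(1:Fin 2))).im^2+(v ((1:Fin 2),(0:Fin 2))).re^2+(v ((1:Fin 2),(0:Fin 2))).im^2-(v ((1:Fin 2),(1:Fin 2))).re^2-(v ((1:Fin 2),(1:Fin 2))).im^2)))) / (4*(1-p*q)) := by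
      field_simp
      ring
    rw [hE]
    apply div_nonneg _ (by linarith)
    exact hQQ
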